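/- Let {x,z} = {q,−1} and let (R^q_{u,w}) and (R^{−1}_{u,w}) be the two families of Kazhdan–Lusztig R-polynomials of a pircon system (P,S) (both with respect to the same S). Then ι^x(j_P(m)) = j_P(ι^z(m)) for every m ∈ 𝓜_P. -/

import Mathlib

open Polynomial LaurentPolynomial

noncomputable section

/-- A quasi special partial matching of a poset `P`: an involution `M : P → P` such that
for every `t`, either `M t ⋖ t`, `M t = t`, or `t ⋖ M t`, and whenever `t ⋖ u` and
`M t ≠ u`, then `M t < M u`. -/
def IsQSPM {P : Type*} [PartialOrder P] (M : P → P) : Prop :=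
  Function.Involutive M ∧
  (∀ t : P, M t ⋖ t ∨ M t = t ∨ t ⋖ M t) ∧
  ∀ t u : P, t ⋖ u → M t ≠ u → M t < M u

/-- A quasi special partial matching of the order ideal `P_{≤w}`. -/
def IsQSPMOn {P : Type*} [PartialOrder P] (w : P) (M : P → P) : Prop :=
  (∀ u : P, u ≤ w → M u ≤ w) ∧
  (∀ u : P, u ≤ w → M (M u) = u) ∧
  (∀ u : P, u ≤ w → M u ⋖ u ∨ M u = u ∨ u ⋖ M u) ∧
  ∀ u t : P, u ≤ w → t ≤ w → u ⋖ t → M u ≠ t → M u < M t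

/-- A special partial matching of the order ideal `P_{≤w}` (whose maximum is `w`). -/
def IsSPMOn {P : Type*} [PartialOrder P] (w : P) (M : P → P) : Prop :=
  IsQSPMOn w M ∧ M w ⋖ w

/-- A pircon: for every non-minimal `x`, the order ideal `P_{≤x}` is finite and admits
a special partial matching. -/
def IsPircon (P : Type*) [PartialOrder P] : Prop :=
  ∀ x : P, ¬ IsMin x → (Set.Iic x).Finite ∧ ∃ M : P → P, IsSPMOn x M

/-- A pircon system `(P,S)`: `S` is a set of quasi special partial matchings of `P` such
that every `w ≠ ⊥` is matched downwards by some `M ∈ S`. -/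
def IsPirconSystem {P : Type*} [PartialOrder P] [OrderBot P] (S : Set (P → P)) : Prop :=
  (∀ M ∈ S, IsQSPM M) ∧ ∀ w : P, w ≠ ⊥ → ∃ M ∈ S, M w ⋖ w

/-- The defining properties of the family of Kazhdan--Lusztig `R^x`-polynomials of a
pircon system `(P,S)`, where `x ∈ {q,-1} ⊆ ℤ[q]` (here `q` is the variable `X`). -/
def IsKLRFamily {P : Type*} [PartialOrder P] (S : Set (P → P)) (x : Polynomial ℤ)
    (R : P → P → Polynomial ℤ) : Prop :=
  (∀ u w : P, ¬ u ≤ w → R u w = 0) ∧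
  (∀ w : P, R w w = 1) ∧
  ∀ M ∈ S, ∀ u w : P, M w ⋖ w →
    (M u ⋖ u → R u w = R (M u) (M w)) ∧
    (u ⋖ M u → R u w = (X - 1) * R u (M w) + X * R (M u) (M w)) ∧
    (M u = u → R u w = (X - 1 - x) * R u (M w))

/-- The up-down symmetry for a family of Kazhdan--Lusztig `R^x`-polynomials. -/
def UpDownSymmetry {P : Type*} [PartialOrder P] (S : Set (P → P)) (x : Polynomial ℤ)
    (R : P → P → Polynomial ℤ) : Prop :=
  ∀ M ∈ S, ∀ u w : P, u ⋖ M u →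
    (w ⋖ M w → R u w = R (M u) (M w)) ∧
    (M w ⋖ w → R u w = (X - 1) * R (M u) w + X * R (M u) (M w)) ∧
    (M w = w → R u w = (X - 1 - x) * R (M u) w)

/-!  The ring `A = ℤ[q^{1/2}, q^{-1/2}]` is realized as `LaurentPolynomial ℤ`, with
`q^{1/2} = T 1` and hence `q = T 2`; the bar involution `q^{1/2} ↦ q^{-1/2}` is
`LaurentPolynomial.invert`.  The free `A`-module `𝓜_P = ⊕_{u ∈ P} A·m_u` is realized as
the finitely supported elements of `P → A`, the basis element `m_u` corresponding to the
indicator of `u`. -/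

/-- Evaluation of a polynomial in `q` at `q = T 2`, i.e. the inclusion
`ℤ[q] → ℤ[q^{1/2}, q^{-1/2}]`. -/
def evq (p : Polynomial ℤ) : LaurentPolynomial ℤ :=
  Polynomial.aeval (T 2 : LaurentPolynomial ℤ) p

open Classical in
/-- The `y`-action of the operator `T_M` on `𝓜_P`, written in coordinates:
`T_M(m_v) = m_{M v}` if `v ⋖ M v`; `T_M(m_v) = q·m_{M v} + (q-1)·m_v` if `M v ⋖ v`;
and `T_M(m_v) = y·m_v` if `M v = v`. -/
def TMact {P : Type*} [PartialOrder P] (M : P → P) (y : LaurentPolynomial ℤ)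
    (f : P → LaurentPolynomial ℤ) : P → LaurentPolynomial ℤ := fun u =>
  if M u = u then y * f u
  else if M u < u then f (M u) + (T 2 - 1) * f u
  else T 2 * f (M u)

/-- The map `ι^x` on `𝓜_P`, written in coordinates:
`ι^x(Σ_v f_v·m_v) = Σ_v f̄_v·q^{-ρ(v)}·Σ_{u} (-1)^{ρ(u,v)}·R^x_{u,v}(q)·m_u`. -/
def iotaAct {P : Type*} [PartialOrder P] (ρ : P → ℕ) (R : P → P → Polynomial ℤ)
    (f : P → LaurentPolynomial ℤ) : P → LaurentPolynomial ℤ := fun u =>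
  ∑ᶠ v : P, invert (f v) * (T (-2 * (ρ v : ℤ)) * ((-1) ^ (ρ v - ρ u) * evq (R u v)))

/-- The involution `j_P` of `𝓜_P`: `j_P(a·m_w) = ā·(-q^{-1})^{ρ(w)}·m_w`. -/
def jPact {P : Type*} [PartialOrder P] (ρ : P → ℕ) (f : P → LaurentPolynomial ℤ) :
    P → LaurentPolynomial ℤ := fun w => invert (f w) * (-T (-2)) ^ (ρ w)

/-- `deg f < k/2`. -/
def DegLtHalf (f : Polynomial ℤ) (k : ℤ) : Prop :=
  f = 0 ∨ 2 * (f.natDegree : ℤ) < k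

/-- The Kazhdan--Lusztig--Stanley polynomials of the kernel `(R_{u,w})`: `P_{u,w} = 0`
unless `u ≤ w`, `P_{w,w} = 1`, `deg P_{u,w} < ρ(u,w)/2` for `u < w`, and
`q^{ρ(u,w)}·P_{u,w}(q⁻¹) = Σ_{u ≤ t ≤ w} R_{u,t}(q)·P_{t,w}(q)`. -/
def IsKLSFamily {P : Type*} [PartialOrder P] (ρ : P → ℕ)
    (R Pp : P → P → Polynomial ℤ) : Prop :=
  (∀ u w : P, ¬ u ≤ w → Pp u w = 0) ∧
  (∀ w : P, Pp w w = 1) ∧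
  (∀ u w : P, u < w → DegLtHalf (Pp u w) ((ρ w : ℤ) - (ρ u : ℤ))) ∧
  ∀ u w : P, u ≤ w →
    T (2 * ((ρ w : ℤ) - (ρ u : ℤ))) * invert (evq (Pp u w)) =
      ∑ᶠ t ∈ Set.Icc u w, evq (R u t) * evq (Pp t w)

/-- The Kazhdan--Lusztig element `C^x_w ∈ 𝓜_P`, in coordinates: its coefficient on `m_v`
is `q^{ρ(w)/2}·(-1)^{ρ(v,w)}·q^{-ρ(v)}·P^x_{v,w}(q^{-1})`. -/
def Cel {P : Type*} [PartialOrder P] (ρ : P → ℕ) (Pp : P → P → Polynomial ℤ) (w : P) :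
    P → LaurentPolynomial ℤ := fun v =>
  T (ρ w : ℤ) * ((-1) ^ (ρ w - ρ v) * (T (-2 * (ρ v : ℤ)) * invert (evq (Pp v w))))

/-- The Kazhdan--Lusztig element `C'^x_w ∈ 𝓜_P`, in coordinates: its coefficient on
`m_v` is `q^{-ρ(w)/2}·P^z_{v,w}(q)` (the family `Pp` fed here is `P^z`). -/
def Cel' {P : Type*} [PartialOrder P] (ρ : P → ℕ) (Pp : P → P → Polynomial ℤ) (w : P) :
    P → LaurentPolynomial ℤ := fun v =>
  T (-(ρ w : ℤ)) * evq (Pp v w)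

lemma klr_key {P : Type*} [PartialOrder P] [OrderBot P]
    (ρ : P → ℕ) (hρ0 : ρ (⊥ : P) = 0) (hρcov : ∀ a b : P, a ⋖ b → ρ b = ρ a + 1)
    {S : Set (P → P)} (hS : IsPirconSystem S)
    {x z : Polynomial ℤ} (hxz : (x = X ∧ z = -1) ∨ (x = -1 ∧ z = X))
    {Rx Rz : P → P → Polynomial ℤ}
    (hRx : IsKLRFamily S x Rx) (hRz : IsKLRFamily S z Rz) :
    ∀ v u : P, evq (Rx u v) =
      (-1) ^ (ρ u) * ((-1) ^ (ρ v) *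
        (T (2 * (ρ v : ℤ) - 2 * (ρ u : ℤ)) * invert (evq (Rz u v)))) := by
  have ht : (T 2 : LaurentPolynomial ℤ) * T (-2) = 1 := by
    rw [← T_add]; norm_num [T_zero]
  suffices H : ∀ n : ℕ, ∀ v u : P, ρ v = n → evq (Rx u v) =
      (-1) ^ (ρ u) * ((-1) ^ (ρ v) *
        (T (2 * (ρ v : ℤ) - 2 * (ρ u : ℤ)) * invert (evq (Rz u v)))) from
    fun v u => H (ρ v) v u rfl
  intro n
  induction n using Nat.strong_induction_on with
  | _ n ih =>
    intro v u hv
    by_cases hbot : v = ⊥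
    · subst hbot
      by_cases hu : u = ⊥
      · subst hu
        simp [hRx.2.1, hRz.2.1, evq, hρ0, T_zero]
      · have hle : ¬ u ≤ ⊥ := fun h => hu (le_bot_iff.mp h)
        simp [hRx.1 u ⊥ hle, hRz.1 u ⊥ hle, evq]
    · obtain ⟨M, hM, hMv⟩ := hS.2 v hbot
      have hqspm := hS.1 M hM
      have hρv : ρ v = ρ (M v) + 1 := hρcov _ _ hMv
      have hx := hRx.2.2 M hM u v hMv
      have hz := hRz.2.2 M hM u v hMv
      rcases hqspm.2.1 u with hu | hu | hu
      · -- M u ⋖ u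
        have hρu : ρ u = ρ (M u) + 1 := hρcov _ _ hu
        rw [hx.1 hu, hz.1 hu,
          ih (ρ (M v)) (by omega) (M v) (M u) rfl, hρu, hρv]
        have he : 2 * ((ρ (M v) + 1 : ℕ) : ℤ) - 2 * ((ρ (M u) + 1 : ℕ) : ℤ)
            = 2 * (ρ (M v) : ℤ) - 2 * (ρ (M u) : ℤ) := by push_cast; ring
        rw [he]
        ring
      · -- M u = u
        have IH := ih (ρ (M v)) (by omega) (M v) u rfl
        rw [hx.2.2 hu, hz.2.2 hu, hρv]
        have he1 : (2 * ((ρ (M v) + 1 : ℕ) : ℤ) - 2 * (ρ u : ℤ))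
            = (2 * (ρ (M v) : ℤ) - 2 * (ρ u : ℤ)) + 2 := by push_cast; ring
        rcases hxz with ⟨hX, hZ⟩ | ⟨hX, hZ⟩ <;> subst hX <;> subst hZ <;>
          simp only [evq, map_mul, map_sub, map_add, map_one, map_neg, aeval_X,
            invert_T, he1, T_add] at IH ⊢ <;> rw [IH]
        · linear_combination (((-1 : LaurentPolynomial ℤ)) ^ (ρ u) * (-1) ^ (ρ (M v)) *
            T (2 * (ρ (M v) : ℤ) - 2 * (ρ u : ℤ)) *
            invert ((Polynomial.aeval (T 2 : LaurentPolynomial ℤ)) (Rz u (M v)))) * ht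
        · ring
      · -- u ⋖ M u
        have hρMu : ρ (M u) = ρ u + 1 := hρcov _ _ hu
        have IH1 := ih (ρ (M v)) (by omega) (M v) u rfl
        have IH2 := ih (ρ (M v)) (by omega) (M v) (M u) rfl
        rw [hx.2.1 hu, hz.2.1 hu]
        have he0 : (2 * (ρ (M v) : ℤ) - 2 * (ρ u : ℤ))
            = (2 * ((ρ (M v) + 1 : ℕ) : ℤ) - 2 * (ρ u : ℤ)) + (-2) := by push_cast; ring
        have he2 : (2 * (ρ (M v) : ℤ) - 2 * (ρ (M u) : ℤ))
            = (2 * ((ρ (M v) + 1 : ℕ) : ℤ) - 2 * (ρ u : ℤ)) + (-2) + (-2) := by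
          rw [hρMu]; push_cast; ring
        rw [he0, T_add] at IH1
        rw [he2, T_add, T_add] at IH2
        simp only [evq, map_mul, map_sub, map_add, map_one, map_neg, aeval_X] at IH1 IH2 ⊢
        rw [IH1, IH2, hρv, hρMu]
        simp only [invert_T, map_add, map_mul, map_sub, map_one]
        linear_combination ((((-1 : LaurentPolynomial ℤ)) ^ (ρ u) * (-1) ^ (ρ (M v)) *
            T (2 * ((ρ (M v) + 1 : ℕ) : ℤ) - 2 * (ρ u : ℤ)) *
            invert ((Polynomial.aeval (T 2 : LaurentPolynomial ℤ)) (Rz u (M v))))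
          - (((-1 : LaurentPolynomial ℤ)) ^ (ρ u) * (-1) ^ (ρ (M v)) *
            T (2 * ((ρ (M v) + 1 : ℕ) : ℤ) - 2 * (ρ u : ℤ)) * T (-2) *
            invert ((Polynomial.aeval (T 2 : LaurentPolynomial ℤ)) (Rz (M u) (M v))))) * ht

set_option maxRecDepth 8000 in
/-- The maps `ι^x` and `ι^z` are conjugated by `j_P`: `ι^x ∘ j_P = j_P ∘ ι^z`, where
`{x,z} = {q,-1}` and `(R^x)`, `(R^z)` are the two families of Kazhdan--Lusztig
`R`-polynomials of the pircon system `(P,S)`. -/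
theorem iota_jP_conj {P : Type*} [PartialOrder P] [OrderBot P]
    (ρ : P → ℕ) (hρ0 : ρ (⊥ : P) = 0) (hρcov : ∀ a b : P, a ⋖ b → ρ b = ρ a + 1)
    (hP : IsPircon P) {S : Set (P → P)} (hS : IsPirconSystem S)
    {x z : Polynomial ℤ} (hxz : (x = X ∧ z = -1) ∨ (x = -1 ∧ z = X))
    {Rx Rz : P → P → Polynomial ℤ}
    (hRx : IsKLRFamily S x Rx) (hRz : IsKLRFamily S z Rz)
    (m : P → LaurentPolynomial ℤ) (hm : (Function.support m).Finite) :
    iotaAct ρ Rx (jPact ρ m) = jPact ρ (iotaAct ρ Rz m) := by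
  have key := klr_key ρ hρ0 hρcov hS hxz hRx hRz
  funext u
  show iotaAct ρ Rx (jPact ρ m) u = jPact ρ (iotaAct ρ Rz m) u
  unfold iotaAct jPact
  beta_reduce
  have hmapfin : ∀ (f : P → LaurentPolynomial ℤ),
      invert (∑ᶠ v, f v) = ∑ᶠ v, invert (f v) := fun f =>
    AddEquiv.map_finsum (invert (R := ℤ)).toRingEquiv.toAddEquiv f
  rw [hmapfin]
  have hfin : (Function.support fun v => invert
      (invert (m v) * (T (-2 * (ρ v : ℤ)) * ((-1) ^ (ρ v - ρ u) * evq (Rz u v))))).Finite := by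
    refine hm.subset fun v hv => ?_
    simp only [Function.mem_support] at hv ⊢
    intro h0
    apply hv
    simp [h0]
  rw [finsum_mul _ _]
  refine finsum_congr fun v => ?_
  have hsplit : ∀ (a : ℤ) (n : ℕ), (-T a : LaurentPolynomial ℤ) ^ n = (-1) ^ n * T (n * a) := by
    intro a n; rw [← neg_one_mul, mul_pow, T_pow]
  rw [key v u]
  simp only [map_mul, map_pow, map_neg, map_one, invert_T, neg_mul, neg_neg,
    involutive_invert (m v), hsplit]
  rw [show (-((ρ v : ℤ) * -2)) = 2 * (ρ v : ℤ) by ring,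
    show (2 * (ρ v : ℤ) - 2 * (ρ u : ℤ)) = 2 * (ρ v : ℤ) + ((ρ u : ℤ) * -2) by ring, T_add]
  have hA : (T (2 * (ρ v : ℤ)) : LaurentPolynomial ℤ) * T (-(2 * (ρ v : ℤ))) = 1 := by
    rw [← T_add, add_neg_cancel, T_zero]
  have hr : ((-1 : LaurentPolynomial ℤ)) ^ (ρ v) * (-1) ^ (ρ v) = 1 := by
    rw [← pow_add, ← two_mul, pow_mul]; norm_num
  linear_combination (m v * ((-1 : LaurentPolynomial ℤ)) ^ (ρ v - ρ u) * (-1) ^ (ρ u) *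
      invert (evq (Rz u v)) * T (2 * (ρ v : ℤ)) * T ((ρ u : ℤ) * -2) *
      ((-1 : LaurentPolynomial ℤ)) ^ (ρ v) * (-1) ^ (ρ v)) * hA +
    (m v * ((-1 : LaurentPolynomial ℤ)) ^ (ρ v - ρ u) * (-1) ^ (ρ u) *
      invert (evq (Rz u v)) * T (2 * (ρ v : ℤ)) * T ((ρ u : ℤ) * -2)) * hr

end
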